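/- Let d, n ≥ 1, M ≥ 0, ρ₉ ≥ 0, ρ₁₀ ≥ 0, and let ε > 0 and η > 0. Let V : ℝ^d × ℝ^d → M_n(ℂ) and V⁰ : ℝ^d → M_n(ℂ) be measurable with Frobenius norms bounded by M, and assume: (i) |V(x,ξ) − V(x',ξ)| ≤ ρ₉ and |V⁰(x) − V⁰(x')| ≤ ρ₉ for all ξ and all x, x' with |x − x'| ≤ √d · η; (ii) for every x ∈ ℝ^d and every γ ∈ ℤ^d: | (ε/η)^d ∫_{(η/ε)(γ + [0,1]^d)} V(x, ξ) dξ − V⁰(x) | ≤ ρ₁₀. Then for every γ ∈ ℤ^d: | η^{−d} ∫_{□_γ^η} ( V(x, x/ε) − V⁰(x) ) dx | ≤ 2 ρ₉ + ρ₁₀. -/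

import Mathlib

open MeasureTheory

noncomputable section

/-- `ℝ^d` with its Euclidean structure. -/
abbrev Ed (d : ℕ) := EuclideanSpace ℝ (Fin d)

/-- The cell `η•γ + [0,η]^d` of the rescaled lattice `ηℤ^d`. -/
def cell (d : ℕ) (η : ℝ) (γ : Fin d → ℤ) : Set (Ed d) :=
  {x | ∀ i, η * γ i ≤ x i ∧ x i ≤ η * γ i + η}

/-- Frobenius norm of a complex `n × n` matrix. -/
def frob {n : ℕ} (A : Matrix (Fin n) (Fin n) ℂ) : ℝ :=
  Real.sqrt (∑ i, ∑ k, ‖A i k‖ ^ 2)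

open Pointwise

namespace Stmt17

abbrev Em (n : ℕ) := EuclideanSpace ℂ (Fin n × Fin n)

instance instMeasEm {n : ℕ} : MeasurableSpace (Em n) := borel _
instance instBorelEm {n : ℕ} : BorelSpace (Em n) := ⟨rfl⟩

def matE {n : ℕ} (A : Matrix (Fin n) (Fin n) ℂ) : Em n :=
  (WithLp.equiv 2 _).symm fun pq => A pq.1 pq.2

@[simp] lemma matE_apply {n : ℕ} (A : Matrix (Fin n) (Fin n) ℂ) (pq : Fin n × Fin n) :
    matE A pq = A pq.1 pq.2 := rfl

lemma matE_sub {n : ℕ} (A B : Matrix (Fin n) (Fin n) ℂ) :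
    matE (A - B) = matE A - matE B := rfl

lemma frob_eq_norm {n : ℕ} (A : Matrix (Fin n) (Fin n) ℂ) : frob A = ‖matE A‖ := by
  rw [frob, EuclideanSpace.norm_eq, Fintype.sum_prod_type]
  rfl

lemma cell_eq (d : ℕ) (η : ℝ) (γ : Fin d → ℤ) :
    cell d η γ = (MeasurableEquiv.toLp 2 (Fin d → ℝ)).symm ⁻¹'
      (Set.univ.pi fun i => Set.Icc (η * γ i) (η * γ i + η)) := by
  ext x
  simp only [cell, Set.mem_setOf_eq, Set.mem_preimage, Set.mem_pi, Set.mem_univ,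
    true_implies, Set.mem_Icc]
  rfl

lemma volume_cell (d : ℕ) {η : ℝ} (hη : 0 ≤ η) (γ : Fin d → ℤ) :
    volume (cell d η γ) = ENNReal.ofReal η ^ d := by
  rw [cell_eq,
    (EuclideanSpace.volume_preserving_symm_measurableEquiv_toLp (Fin d)).measure_preimage_equiv,
    volume_pi_pi]
  simp [Real.volume_Icc]

lemma measurableSet_cell (d : ℕ) (η : ℝ) (γ : Fin d → ℤ) : MeasurableSet (cell d η γ) := by
  rw [cell_eq]
  exact (MeasurableEquiv.toLp 2 (Fin d → ℝ)).symm.measurable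
    (MeasurableSet.univ_pi fun i => measurableSet_Icc)

lemma dist_corner {d : ℕ} {η : ℝ} (hη : 0 < η) {γ : Fin d → ℤ} {x : Ed d}
    (hx : x ∈ cell d η γ) (x₀ : Ed d) (hx₀ : ∀ i, x₀ i = η * γ i) :
    dist x x₀ ≤ Real.sqrt d * η := by
  rw [EuclideanSpace.dist_eq]
  have h1 : ∀ i, dist (x i) (x₀ i) ^ 2 ≤ η ^ 2 := by
    intro i
    have h := hx i
    rw [hx₀ i, Real.dist_eq]
    nlinarith [abs_nonneg (x i - η * γ i), abs_le.2 (⟨by linarith [h.1], by linarith [h.2]⟩ :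
      -η ≤ x i - η * γ i ∧ x i - η * γ i ≤ η)]
  calc Real.sqrt (∑ i, dist (x i) (x₀ i) ^ 2) ≤ Real.sqrt (∑ _i : Fin d, η ^ 2) :=
        Real.sqrt_le_sqrt (Finset.sum_le_sum fun i _ => h1 i)
    _ = Real.sqrt d * η := by
        rw [Finset.sum_const, Finset.card_univ, Fintype.card_fin, nsmul_eq_mul,
          Real.sqrt_mul (by positivity), Real.sqrt_sq hη.le]

lemma smul_mem_cell_iff {d : ℕ} {ε η : ℝ} (hε : 0 < ε) (γ : Fin d → ℤ) (y : Ed d) :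
    ε • y ∈ cell d η γ ↔ y ∈ cell d (η / ε) γ := by
  simp only [cell, Set.mem_setOf_eq, PiLp.smul_apply, smul_eq_mul]
  refine forall_congr' fun i => ?_
  rw [div_mul_eq_mul_div, ← add_div, div_le_iff₀ hε, le_div_iff₀ hε, mul_comm (y i) ε]

lemma inv_smul_cell {d : ℕ} {ε η : ℝ} (hε : 0 < ε) (γ : Fin d → ℤ) :
    ε⁻¹ • cell d η γ = cell d (η / ε) γ := by
  ext y
  rw [Set.mem_inv_smul_set_iff₀ hε.ne', smul_mem_cell_iff hε]

lemma measurable_matE {n : ℕ} {α : Type*} [MeasurableSpace α] {f : α → Matrix (Fin n) (Fin n) ℂ}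
    (hf : ∀ p q, Measurable fun a => f a p q) : Measurable fun a => matE (f a) := by
  have h : (fun a => matE (f a)) =
      (EuclideanSpace.equiv (Fin n × Fin n) ℂ).symm ∘ fun a pq => f a pq.1 pq.2 := rfl
  rw [h]
  exact ((EuclideanSpace.equiv (Fin n × Fin n) ℂ).symm.continuous.measurable).comp
    (measurable_pi_lambda _ fun pq => hf pq.1 pq.2)

lemma integrableOn_of_bdd {n d : ℕ} {f : Ed d → Em n} {s : Set (Ed d)} (hs : volume s < ⊤)
    (hf : AEStronglyMeasurable f (volume.restrict s)) {C : ℝ} (hC : ∀ x, ‖f x‖ ≤ C) :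
    IntegrableOn f s := by
  haveI : IsFiniteMeasure (volume.restrict s) :=
    ⟨by rwa [Measure.restrict_apply_univ]⟩
  exact (integrable_const C).mono' hf (Filter.Eventually.of_forall hC)

lemma integral_apply {n : ℕ} {α : Type*} [MeasurableSpace α] {f : α → Em n} {μ : Measure α}
    (hf : Integrable f μ) (pq : Fin n × Fin n) :
    (∫ x, f x ∂μ) pq = ∫ x, f x pq ∂μ := by
  simpa using ((EuclideanSpace.proj (𝕜 := ℂ) pq).integral_comp_comm hf).symm

end Stmt17

open Stmt17

/-- Cell-average estimate (5.31) and following, of the locally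
almost periodic example (Section 3.5): if `V(·,ξ)` and `V⁰` have modulus of
continuity `ρ₉` at scale `√d·η` and the means of `V(x,·)` over all cubes
`(η/ε)(γ + [0,1]^d)` approximate `V⁰(x)` up to `ρ₁₀`, then the average of
`V(x, x/ε) − V⁰(x)` over any cell `□_γ^η` is at most `2ρ₉ + ρ₁₀`. -/
theorem stmt_17 (d n : ℕ) (hd : 1 ≤ d) (hn : 1 ≤ n)
    (M ρ₉ ρ₁₀ ε η : ℝ)
    (hM : 0 ≤ M) (h9 : 0 ≤ ρ₉) (h10 : 0 ≤ ρ₁₀) (hε : 0 < ε) (hη : 0 < η)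
    (V : Ed d → Ed d → Matrix (Fin n) (Fin n) ℂ)
    (V₀ : Ed d → Matrix (Fin n) (Fin n) ℂ)
    (hmeasV : ∀ p q, Measurable fun xy : Ed d × Ed d => V xy.1 xy.2 p q)
    (hmeasV₀ : ∀ p q, Measurable fun x => V₀ x p q)
    (hbdV : ∀ x ξ : Ed d, frob (V x ξ) ≤ M)
    (hbdV₀ : ∀ x : Ed d, frob (V₀ x) ≤ M)
    (hcontV : ∀ (ξ x x' : Ed d), dist x x' ≤ Real.sqrt d * η →
      frob (V x ξ - V x' ξ) ≤ ρ₉)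
    (hcontV₀ : ∀ (x x' : Ed d), dist x x' ≤ Real.sqrt d * η →
      frob (V₀ x - V₀ x') ≤ ρ₉)
    (hmean : ∀ (x : Ed d) (γ : Fin d → ℤ),
      frob (fun p q =>
          ((ε / η : ℝ) : ℂ) ^ d * (∫ ξ in cell d (η / ε) γ, V x ξ p q)
            - V₀ x p q) ≤ ρ₁₀) :
    ∀ γ : Fin d → ℤ,
      frob (fun p q => ((η : ℂ) ^ d)⁻¹ *
          ∫ x in cell d η γ, (V x (ε⁻¹ • x) p q - V₀ x p q))
        ≤ 2 * ρ₉ + ρ₁₀ := by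
  intro γ
  have hηd : (0:ℝ) < η ^ d := pow_pos hη d
  set s : Set (Ed d) := cell d η γ with hs_def
  set s' : Set (Ed d) := cell d (η / ε) γ with hs'_def
  set x₀ : Ed d := (EuclideanSpace.equiv (Fin d) ℝ).symm (fun i => η * γ i) with hx₀_def
  have hx₀i : ∀ i, x₀ i = η * γ i := fun i => rfl
  -- volumes
  have hvol : volume s = ENNReal.ofReal η ^ d := volume_cell d hη.le γ
  have hvol' : volume s' = ENNReal.ofReal (η / ε) ^ d := volume_cell d (by positivity) γ
  have hslt : volume s < ⊤ := by
    rw [hvol]; exact ENNReal.pow_lt_top ENNReal.ofReal_lt_top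
  have hs'lt : volume s' < ⊤ := by
    rw [hvol']; exact ENNReal.pow_lt_top ENNReal.ofReal_lt_top
  have hvolR : (volume s).toReal = η ^ d := by
    rw [hvol, ENNReal.toReal_pow, ENNReal.toReal_ofReal hη.le]
  -- Euclidean-valued versions
  set W : Ed d → Ed d → Em n := fun x ξ => matE (V x ξ) with hW
  set W₀ : Ed d → Em n := fun x => matE (V₀ x) with hW₀
  have hWbd : ∀ x ξ, ‖W x ξ‖ ≤ M := fun x ξ => by
    rw [hW, ← frob_eq_norm]; exact hbdV x ξ
  have hW₀bd : ∀ x, ‖W₀ x‖ ≤ M := fun x => by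
    rw [hW₀, ← frob_eq_norm]; exact hbdV₀ x
  -- measurability
  have hmeasW : Measurable fun xy : Ed d × Ed d => W xy.1 xy.2 :=
    measurable_matE fun p q => hmeasV p q
  have hmeas1 : Measurable fun x : Ed d => W x (ε⁻¹ • x) :=
    hmeasW.comp (measurable_id.prodMk (measurable_const_smul _))
  have hmeas2 : Measurable fun x : Ed d => W x₀ (ε⁻¹ • x) :=
    hmeasW.comp (measurable_const.prodMk (measurable_const_smul _))
  have hmeasWx₀ : Measurable fun ξ : Ed d => W x₀ ξ :=
    hmeasW.comp (measurable_const.prodMk measurable_id)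
  have hmeasW₀ : Measurable W₀ := measurable_matE hmeasV₀
  -- integrability
  have hint1 : IntegrableOn (fun x => W x (ε⁻¹ • x)) s :=
    integrableOn_of_bdd hslt hmeas1.aestronglyMeasurable fun x => hWbd _ _
  have hint2 : IntegrableOn (fun x => W x₀ (ε⁻¹ • x)) s :=
    integrableOn_of_bdd hslt hmeas2.aestronglyMeasurable fun x => hWbd _ _
  have hint0 : IntegrableOn W₀ s :=
    integrableOn_of_bdd hslt hmeasW₀.aestronglyMeasurable fun x => hW₀bd _
  have hintc : IntegrableOn (fun _ : Ed d => W₀ x₀) s :=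
    integrableOn_const hslt.ne
  have hint' : IntegrableOn (fun ξ => W x₀ ξ) s' :=
    integrableOn_of_bdd hs'lt hmeasWx₀.aestronglyMeasurable fun x => hWbd _ _
  have hintA : IntegrableOn (fun x => W x (ε⁻¹ • x) - W₀ x) s := hint1.sub hint0
  -- the three pieces
  set T : Em n := ((η:ℂ)^d)⁻¹ • ∫ x in s, (W x (ε⁻¹ • x) - W₀ x) with hT
  set T₁ : Em n := ((η:ℂ)^d)⁻¹ • ∫ x in s, (W x (ε⁻¹ • x) - W x₀ (ε⁻¹ • x)) with hT₁
  set T₂ : Em n := ((η:ℂ)^d)⁻¹ • ∫ x in s, (W x₀ (ε⁻¹ • x) - W₀ x₀) with hT₂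
  set T₃ : Em n := ((η:ℂ)^d)⁻¹ • ∫ x in s, (W₀ x₀ - W₀ x) with hT₃
  have hcsmul : ∀ (r : ℝ) (v : Em n), ((r : ℂ)) • v = r • v := fun r v => Complex.coe_smul r v
  have hηinv : ((η:ℂ)^d)⁻¹ = (((η ^ d)⁻¹ : ℝ) : ℂ) := by push_cast; ring
  -- the goal as a norm
  have hgoal : frob (fun p q => ((η : ℂ) ^ d)⁻¹ *
      ∫ x in s, (V x (ε⁻¹ • x) p q - V₀ x p q)) = ‖T‖ := by
    refine (frob_eq_norm _).trans ?_
    congr 1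
    ext pq
    have hfun : (fun x => (W x (ε⁻¹ • x) - W₀ x) pq)
        = fun x => V x (ε⁻¹ • x) pq.1 pq.2 - V₀ x pq.1 pq.2 := by
      funext x; simp [hW, hW₀, PiLp.sub_apply]
    rw [hT]
    simp only [matE_apply, PiLp.smul_apply, smul_eq_mul]
    rw [integral_apply hintA pq, hfun]
    rfl
  -- splitting
  have hD1 : IntegrableOn (fun x => W x (ε⁻¹ • x) - W x₀ (ε⁻¹ • x)) s volume := hint1.sub hint2
  have hD2 : IntegrableOn (fun x => W x₀ (ε⁻¹ • x) - W₀ x₀) s volume := hint2.sub hintc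
  have hD3 : IntegrableOn (fun x => W₀ x₀ - W₀ x) s volume := hintc.sub hint0
  have hD12 : IntegrableOn (fun x => (W x (ε⁻¹ • x) - W x₀ (ε⁻¹ • x))
      + (W x₀ (ε⁻¹ • x) - W₀ x₀)) s volume := hD1.add hD2
  have hsplit : T = T₁ + T₂ + T₃ := by
    rw [hT, hT₁, hT₂, hT₃, ← smul_add, ← smul_add]
    congr 1
    have hintg : ∫ x in s, (W x (ε⁻¹ • x) - W₀ x)
        = ∫ x in s, (((W x (ε⁻¹ • x) - W x₀ (ε⁻¹ • x)) + (W x₀ (ε⁻¹ • x) - W₀ x₀))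
          + (W₀ x₀ - W₀ x)) := by
      congr 1
      funext x
      abel
    rw [hintg, integral_add hD12 hD3, integral_add hD1 hD2]
  -- generic bound for the averaging
  have havg : ∀ (g : Ed d → Em n) (C : ℝ), IntegrableOn g s → (∀ x ∈ s, ‖g x‖ ≤ C) →
      ‖((η:ℂ)^d)⁻¹ • ∫ x in s, g x‖ ≤ C := by
    intro g C hg hgC
    have h1 : ‖((η:ℂ)^d)⁻¹‖ = (η ^ d)⁻¹ := by
      rw [norm_inv, norm_pow, Complex.norm_real, Real.norm_eq_abs, abs_of_pos hη]
    rw [norm_smul, h1]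
    have h2 : ‖∫ x in s, g x‖ ≤ C * (volume s).toReal :=
      norm_setIntegral_le_of_norm_le_const hslt hgC
    rw [hvolR] at h2
    calc (η ^ d)⁻¹ * ‖∫ x in s, g x‖ ≤ (η ^ d)⁻¹ * (C * η ^ d) := by
          exact mul_le_mul_of_nonneg_left h2 (by positivity)
      _ = C := by field_simp
  -- bound T₁
  have hbT₁ : ‖T₁‖ ≤ ρ₉ := by
    refine havg _ _ hD1 fun x hx => ?_
    have : W x (ε⁻¹ • x) - W x₀ (ε⁻¹ • x) = matE (V x (ε⁻¹ • x) - V x₀ (ε⁻¹ • x)) := by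
      rw [matE_sub, hW]
    rw [this, ← frob_eq_norm]
    exact hcontV (ε⁻¹ • x) x x₀ (dist_corner hη hx x₀ hx₀i)
  -- bound T₃
  have hbT₃ : ‖T₃‖ ≤ ρ₉ := by
    refine havg _ _ hD3 fun x hx => ?_
    have : W₀ x₀ - W₀ x = matE (V₀ x₀ - V₀ x) := by rw [matE_sub, hW₀]
    rw [this, ← frob_eq_norm]
    exact hcontV₀ x₀ x (by rw [dist_comm]; exact dist_corner hη hx x₀ hx₀i)
  -- compute T₂ via change of variables
  set I : Em n := ∫ ξ in s', W x₀ ξ with hI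
  have hchg : ∫ x in s, W x₀ (ε⁻¹ • x) = ε ^ d • I := by
    have h := Measure.setIntegral_comp_smul_of_pos volume (fun y => W x₀ y) s (inv_pos.2 hε)
    rw [inv_smul_cell hε γ, finrank_euclideanSpace_fin, inv_pow, inv_inv] at h
    rw [hs_def] at h ⊢
    rw [h, hI, hs'_def]
  have hT₂eq : T₂ = ((ε / η) ^ d : ℝ) • I - W₀ x₀ := by
    rw [hT₂, integral_sub hint2 hintc, setIntegral_const, hchg, Measure.real, hvolR, hηinv, hcsmul,
      smul_sub, smul_smul, smul_smul, inv_mul_cancel₀ hηd.ne', one_smul, div_pow]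
    congr 1
    congr 1
    field_simp
  -- bound T₂ from the mean hypothesis
  have hbT₂ : ‖T₂‖ ≤ ρ₁₀ := by
    have hfr : frob (fun p q => ((ε / η : ℝ) : ℂ) ^ d * (∫ ξ in s', V x₀ ξ p q)
        - V₀ x₀ p q) = ‖T₂‖ := by
      refine (frob_eq_norm _).trans ?_
      congr 1
      ext pq
      have hI' : I pq = ∫ ξ in s', V x₀ ξ pq.1 pq.2 := by
        rw [hI, integral_apply hint' pq]
        simp [hW]
      rw [hT₂eq]
      simp only [matE_apply, PiLp.sub_apply, PiLp.smul_apply]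
      rw [hI', hW₀]
      simp only [matE_apply]
      show (((ε / η : ℝ) : ℂ) ^ d * (∫ ξ in s', V x₀ ξ pq.1 pq.2) - V₀ x₀ pq.1 pq.2) = _
      congr 1
      rw [Complex.real_smul]
      push_cast
      ring
    rw [← hfr]
    exact hmean x₀ γ
  -- conclude
  rw [hgoal, hsplit]
  calc ‖T₁ + T₂ + T₃‖ ≤ ‖T₁‖ + ‖T₂‖ + ‖T₃‖ := norm_add₃_le
    _ ≤ 2 * ρ₉ + ρ₁₀ := by linarith


end
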